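/- arXiv:1109.4047 — 4 statements merged into one kernel-verified Lean document; each statement's English description precedes it below -/
import Mathlib

section
/- Let N ≥ 1 and k ≥ 1. Consider the set G of tuples y : Fin k → ℝ^N such that (a) for every subset s ⊆ Fin k of cardinality at most N + 1, the family (y_i)_{i ∈ s} is affinely independent, and (b) for every subset s ⊆ Fin k of cardinality N + 2, there is no point x ∈ ℝ^N equidistant from all the points y_i, i ∈ s (equivalently, no N + 2 of the points lie on a common sphere). Then G is open and dense in the space (ℝ^N)^k of all such tuples. -/
open scoped RealInnerProductSpace
open Metric Module

section Aux

noncomputable def liftE {N : ℕ} (v : EuclideanSpace ℝ (Fin N)) : EuclideanSpace ℝ (Fin (N+1)) :=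
  (WithLp.equiv 2 (Fin (N+1) → ℝ)).symm (Fin.snoc (WithLp.equiv 2 (Fin N → ℝ) v) (‖v‖^2))

lemma liftE_castSucc {N : ℕ} (v : EuclideanSpace ℝ (Fin N)) (i : Fin N) :
    liftE v i.castSucc = v i := by simp [liftE]
lemma liftE_last {N : ℕ} (v : EuclideanSpace ℝ (Fin N)) :
    liftE v (Fin.last N) = ‖v‖^2 := by simp [liftE]

noncomputable def wlow {N : ℕ} (w : EuclideanSpace ℝ (Fin (N+1))) : EuclideanSpace ℝ (Fin N) :=
  (WithLp.equiv 2 (Fin N → ℝ)).symm (fun j => w j.castSucc)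

lemma wlow_apply {N : ℕ} (w : EuclideanSpace ℝ (Fin (N+1))) (j : Fin N) :
    wlow w j = w j.castSucc := rfl

lemma inner_liftE {N : ℕ} (w : EuclideanSpace ℝ (Fin (N+1))) (v : EuclideanSpace ℝ (Fin N)) :
    ⟪w, liftE v⟫ = ⟪wlow w, v⟫ + w (Fin.last N) * ‖v‖^2 := by
  simp only [PiLp.inner_apply, RCLike.inner_apply, conj_trivial, Fin.sum_univ_castSucc,
    liftE_castSucc, liftE_last, wlow_apply]
  ring

lemma w_eq_zero {N : ℕ} (w : EuclideanSpace ℝ (Fin (N+1))) (h1 : wlow w = 0)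
    (h2 : w (Fin.last N) = 0) : w = 0 := by
  ext j
  refine Fin.lastCases ?_ (fun i => ?_) j
  · simpa using h2
  · have := wlow_apply w i
    rw [h1] at this
    simpa using this.symm

lemma vectorSpan_range_le_orthogonal {V : Type} [NormedAddCommGroup V]
    [InnerProductSpace ℝ V] {ι : Type*} (f : ι → V) (w : V)
    (h : ∀ i j : ι, ⟪w, f i - f j⟫ = 0) :
    vectorSpan ℝ (Set.range f) ≤ (ℝ ∙ w)ᗮ := by
  rw [vectorSpan_def, Submodule.span_le]
  rintro u hu
  obtain ⟨p1, ⟨i, rfl⟩, p2, ⟨j, rfl⟩, rfl⟩ := Set.mem_vsub.mp hu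
  exact Submodule.mem_orthogonal_singleton_iff_inner_right.mpr (h i j)

-- orthogonal complement of a single nonzero vector has corank one
lemma finrank_orthogonal_singleton {V : Type} [NormedAddCommGroup V] [InnerProductSpace ℝ V]
    [FiniteDimensional ℝ V] {w : V} (hw : w ≠ 0) :
    finrank ℝ ((ℝ ∙ w)ᗮ) + 1 = finrank ℝ V := by
  have := Submodule.finrank_add_finrank_orthogonal (𝕜 := ℝ) (ℝ ∙ w)
  rw [finrank_span_singleton hw] at this
  omega

lemma not_affineIndependent_lift_of_cospherical {N k : ℕ} {y : Fin k → EuclideanSpace ℝ (Fin N)}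
    {s : Finset (Fin k)} (hcard : s.card = N + 2) {x : EuclideanSpace ℝ (Fin N)} {r : ℝ}
    (h : ∀ i ∈ s, dist x (y i) = r) :
    ¬ AffineIndependent ℝ (fun i : s => liftE (y i)) := by
  intro hind
  set w : EuclideanSpace ℝ (Fin (N+1)) :=
    (WithLp.equiv 2 (Fin (N+1) → ℝ)).symm
      (Fin.snoc (WithLp.equiv 2 (Fin N → ℝ) ((-2 : ℝ) • x)) 1) with hwdef
  have hwlow : wlow w = (-2 : ℝ) • x := by
    ext j
    rw [wlow_apply]
    simp [hwdef]
  have hwlast : w (Fin.last N) = 1 := by simp [hwdef]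
  have hw0 : w ≠ 0 := fun hz => by
    have := congrFun (congrArg (WithLp.equiv 2 (Fin (N+1) → ℝ)) hz) (Fin.last N)
    rw [hwdef] at this
    simpa using this
  have hval : ∀ i ∈ s, ⟪w, liftE (y i)⟫ = r^2 - ‖x‖^2 := by
    intro i hi
    rw [inner_liftE, hwlow, hwlast, real_inner_smul_left]
    have hd := h i hi
    have : dist x (y i) ^ 2 = ‖x‖^2 - 2 * ⟪x, y i⟫ + ‖y i‖^2 := by
      rw [dist_eq_norm, norm_sub_sq_real]
      try ring
    rw [hd] at this
    linarith
  have horth : vectorSpan ℝ (Set.range fun i : s => liftE (y i)) ≤ (ℝ ∙ w)ᗮ := by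
    apply vectorSpan_range_le_orthogonal
    intro i j
    rw [inner_sub_right, hval i i.2, hval j j.2]
    ring
  have hrank := hind.finrank_vectorSpan (by rw [Fintype.card_coe, hcard])
  have hle := Submodule.finrank_mono horth
  rw [hrank] at hle
  have := finrank_orthogonal_singleton hw0
  rw [finrank_euclideanSpace_fin] at this
  omega

lemma cospherical_of_not_affineIndependent_lift {N k : ℕ} (hN : 1 ≤ N)
    {y : Fin k → EuclideanSpace ℝ (Fin N)} {s : Finset (Fin k)} (hcard : s.card = N + 2)
    (ha : ∀ t : Finset (Fin k), t.card ≤ N + 1 → AffineIndependent ℝ (fun i : t => y i))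
    (hdep : ¬ AffineIndependent ℝ (fun i : s => liftE (y i))) :
    ∃ (x : EuclideanSpace ℝ (Fin N)) (r : ℝ), ∀ i ∈ s, dist x (y i) = r := by
  classical
  -- the vector span of the lifted points is a proper subspace
  have hfr : finrank ℝ (vectorSpan ℝ (Set.range fun i : s => liftE (y i))) ≤ N := by
    rw [finrank_vectorSpan_le_iff_not_affineIndependent ℝ _ (by rw [Fintype.card_coe, hcard])]
    exact hdep
  have hne : (vectorSpan ℝ (Set.range fun i : s => liftE (y i)))ᗮ ≠ ⊥ := by
    intro hbot
    have htop := Submodule.orthogonal_eq_bot_iff.mp hbot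
    rw [htop] at hfr
    rw [finrank_top] at hfr
    rw [finrank_euclideanSpace_fin] at hfr
    omega
  obtain ⟨w, hwmem, hw0⟩ := Submodule.exists_mem_ne_zero_of_ne_bot hne
  -- the lifted points all have the same inner product against w
  obtain ⟨i0, hi0⟩ : ∃ i, i ∈ s := Finset.card_pos.mp (show 0 < s.card by omega)
  set b : ℝ := ⟪w, liftE (y i0)⟫ with hb
  have hconst : ∀ i ∈ s, ⟪w, liftE (y i)⟫ = b := by
    intro i hi
    have hmem : liftE (y i) - liftE (y i0) ∈
        vectorSpan ℝ (Set.range fun i : s => liftE (y i)) := by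
      have h1 : liftE (y i) ∈ Set.range fun i : s => liftE (y i) := ⟨⟨i, hi⟩, rfl⟩
      have h2 : liftE (y i0) ∈ Set.range fun i : s => liftE (y i) := ⟨⟨i0, hi0⟩, rfl⟩
      simpa using vsub_mem_vectorSpan ℝ h1 h2
    have := (Submodule.mem_orthogonal _ w).mp hwmem _ hmem
    rw [inner_sub_left] at this
    rw [hb]
    linarith [real_inner_comm (liftE (y i)) w, real_inner_comm (liftE (y i0)) w, this]
  set a := wlow w with hadef
  set c := w (Fin.last N) with hcdef
  have hac : ∀ i ∈ s, ⟪a, y i⟫ + c * ‖y i‖^2 = b := by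
    intro i hi
    rw [← inner_liftE]
    exact hconst i hi
  by_cases hc : c = 0
  · -- impossible: the points of s would lie on a hyperplane
    exfalso
    have ha0 : a ≠ 0 := fun h0 => hw0 (w_eq_zero w h0 hc)
    obtain ⟨t, hts, htcard⟩ := Finset.exists_subset_card_eq (show N + 1 ≤ s.card by omega)
    have hat := ha t (le_of_eq htcard)
    have hrk := hat.finrank_vectorSpan (by rw [Fintype.card_coe, htcard])
    have horth : vectorSpan ℝ (Set.range fun i : t => y i) ≤ (ℝ ∙ a)ᗮ := by
      apply vectorSpan_range_le_orthogonal
      intro i j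
      rw [inner_sub_right]
      have h1 := hac i (hts i.2)
      have h2 := hac j (hts j.2)
      rw [hc] at h1 h2
      linarith
    have hle := Submodule.finrank_mono horth
    rw [hrk] at hle
    have := finrank_orthogonal_singleton ha0
    rw [finrank_euclideanSpace_fin] at this
    omega
  · -- the points lie on a common sphere
    set x : EuclideanSpace ℝ (Fin N) := (-(2 * c)⁻¹) • a with hx
    refine ⟨x, dist x (y i0), fun i hi => ?_⟩
    have key : ∀ i ∈ s, dist x (y i) ^ 2 = ‖x‖^2 + b / c := by
      intro i hi
      have h1 := hac i hi
      have hnorm : ‖y i‖^2 = (b - ⟪a, y i⟫) / c := by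
        rw [eq_div_iff hc]
        linarith
      have hinner : ⟪x, y i⟫ = (-(2 * c)⁻¹) * ⟪a, y i⟫ := by
        rw [hx, real_inner_smul_left]
      have hd : dist x (y i) ^ 2 = ‖x‖^2 - 2 * ⟪x, y i⟫ + ‖y i‖^2 := by
        rw [dist_eq_norm, norm_sub_sq_real]
        try ring
      rw [hd, hinner, hnorm]
      field_simp
      ring
    have e1 := key i hi
    have e2 := key i0 hi0
    have : dist x (y i) ^ 2 = dist x (y i0) ^ 2 := by rw [e1, e2]
    calc dist x (y i) = Real.sqrt (dist x (y i) ^ 2) := (Real.sqrt_sq dist_nonneg).symm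
      _ = Real.sqrt (dist x (y i0) ^ 2) := by rw [this]
      _ = dist x (y i0) := Real.sqrt_sq dist_nonneg

lemma isOpen_affineIndependent (ι V : Type*) [Fintype ι] [NormedAddCommGroup V]
    [NormedSpace ℝ V] [FiniteDimensional ℝ V] :
    IsOpen {p : ι → V | AffineIndependent ℝ p} := by
  cases isEmpty_or_nonempty ι with
  | inl h =>
    have : {p : ι → V | AffineIndependent ℝ p} = Set.univ :=
      Set.eq_univ_of_forall fun p => affineIndependent_of_subsingleton ℝ p
    rw [this]; exact isOpen_univ
  | inr h =>
    obtain ⟨i0⟩ := h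
    have heq : {p : ι → V | AffineIndependent ℝ p} =
        (fun p : ι → V => fun i : {x // x ≠ i0} => p i - p i0) ⁻¹'
          {f : {x // x ≠ i0} → V | LinearIndependent ℝ f} := by
      ext p
      simp only [Set.mem_setOf_eq, Set.mem_preimage]
      rw [affineIndependent_iff_linearIndependent_vsub ℝ p i0]
      rfl
    rw [heq]
    exact (isOpen_setOf_linearIndependent (𝕜 := ℝ) (E := V)).preimage
      (continuous_pi fun i : {x // x ≠ i0} =>
        ((continuous_apply (i : ι)).sub (continuous_apply i0)))


lemma quad_dense {N : ℕ} (hN : 1 ≤ N) (a : EuclideanSpace ℝ (Fin N)) (c b : ℝ)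
    (h : a ≠ 0 ∨ c ≠ 0) :
    Dense {v : EuclideanSpace ℝ (Fin N) | ⟪a, v⟫ + c * ‖v‖ ^ 2 ≠ b} := by
  rw [Metric.dense_iff]
  intro v0 ε hε
  by_contra hcon
  rw [Set.not_nonempty_iff_eq_empty] at hcon
  have hall : ∀ v ∈ ball v0 ε, ⟪a, v⟫ + c * ‖v‖ ^ 2 = b := by
    intro v hv
    by_contra hne
    exact Set.eq_empty_iff_forall_notMem.mp hcon v ⟨hv, hne⟩
  -- key: for all u and small positive t, α t + β t² = 0
  have key : ∀ u : EuclideanSpace ℝ (Fin N),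
      (⟪a, u⟫ + 2 * c * ⟪v0, u⟫ = 0) ∧ c * ‖u‖ ^ 2 = 0 := by
    intro u
    set α := ⟪a, u⟫ + 2 * c * ⟪v0, u⟫ with hα
    set β := c * ‖u‖ ^ 2 with hβ
    have hb0 : ⟪a, v0⟫ + c * ‖v0‖ ^ 2 = b := hall v0 (mem_ball_self hε)
    have hquad : ∀ t : ℝ, |t| * ‖u‖ < ε → α * t + β * t ^ 2 = 0 := by
      intro t ht
      have hv : v0 + t • u ∈ ball v0 ε := by
        rw [mem_ball, dist_eq_norm]
        simpa [norm_smul, abs_of_nonneg] using ht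
      have := hall _ hv
      have hnorm : ‖v0 + t • u‖ ^ 2 = ‖v0‖ ^ 2 + 2 * (t * ⟪v0, u⟫) + t ^ 2 * ‖u‖ ^ 2 := by
        rw [norm_add_sq_real, real_inner_smul_right, norm_smul]
        ring_nf
        try rw [Real.norm_eq_abs, sq_abs]
        try ring
      rw [inner_add_right, real_inner_smul_right, hnorm] at this
      rw [hα, hβ]
      nlinarith [this, hb0]
    set t1 := ε / (2 * (‖u‖ + 1)) with ht1
    have hu1 : (0:ℝ) < ‖u‖ + 1 := by positivity
    have ht1pos : 0 < t1 := by positivity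
    have hsmall : ∀ t : ℝ, 0 < t → t ≤ t1 → |t| * ‖u‖ < ε := by
      intro t ht htle
      rw [abs_of_pos ht]
      calc t * ‖u‖ ≤ t1 * ‖u‖ := by nlinarith [norm_nonneg (u : EuclideanSpace ℝ (Fin N))]
        _ < ε := by
          rw [ht1]
          rw [div_mul_eq_mul_div, div_lt_iff₀ (by positivity)]
          nlinarith [norm_nonneg (u : EuclideanSpace ℝ (Fin N))]
    have h1 := hquad t1 (hsmall t1 ht1pos le_rfl)
    have h2 := hquad (t1/2) (hsmall (t1/2) (by positivity) (by linarith))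
    have hb2 : β * t1 ^ 2 = 0 := by linear_combination 2 * h1 - 4 * h2
    have hbz : β = 0 := by
      rcases mul_eq_zero.mp hb2 with h' | h'
      · exact h'
      · exact absurd (pow_eq_zero_iff (n := 2) (by norm_num) |>.mp h') (ne_of_gt ht1pos)
    have haz : α = 0 := by
      rw [hbz] at h1
      simp only [zero_mul, add_zero] at h1
      rcases mul_eq_zero.mp h1 with h' | h'
      · exact h'
      · exact absurd h' (ne_of_gt ht1pos)
    exact ⟨haz, hbz⟩
  -- now derive contradiction
  have hc : c = 0 := by
    have := (key (EuclideanSpace.single ⟨0, hN⟩ 1)).2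
    rw [EuclideanSpace.norm_single] at this
    simpa using this
  have ha : a = 0 := by
    have := (key a).1
    rw [hc] at this
    simp only [mul_zero, zero_mul, add_zero] at this
    exact inner_self_eq_zero.mp this
  rcases h with h | h
  · exact h ha
  · exact h hc

lemma dense_avoid_affine {N : ℕ} {V : Type} [NormedAddCommGroup V] [InnerProductSpace ℝ V]
    [FiniteDimensional ℝ V] (F : EuclideanSpace ℝ (Fin N) → V)
    (HF : ∀ (w : V), w ≠ 0 → ∀ b : ℝ, Dense {v : EuclideanSpace ℝ (Fin N) | ⟪w, F v⟫ ≠ b})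
    (A : AffineSubspace ℝ V) (hA : A.direction ≠ ⊤) :
    Dense {v : EuclideanSpace ℝ (Fin N) | F v ∉ A} := by
  rcases Set.eq_empty_or_nonempty (A : Set V) with hemp | ⟨x0, hx0⟩
  · have : {v : EuclideanSpace ℝ (Fin N) | F v ∉ A} = Set.univ := by
      apply Set.eq_univ_of_forall
      intro v hv
      exact Set.eq_empty_iff_forall_notMem.mp hemp _ hv
    rw [this]; exact dense_univ
  · have horth : A.directionᗮ ≠ ⊥ := by
      intro hbot
      exact hA (Submodule.orthogonal_eq_bot_iff.mp hbot)
    obtain ⟨w, hwmem, hw0⟩ := Submodule.exists_mem_ne_zero_of_ne_bot horth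
    refine Dense.mono ?_ (HF w hw0 ⟪w, x0⟫)
    intro v hv hmem
    apply hv
    have hdir : F v - x0 ∈ A.direction := by
      simpa using AffineSubspace.vsub_mem_direction hmem hx0
    have := (Submodule.mem_orthogonal A.direction w).mp hwmem _ hdir
    rw [inner_sub_left] at this
    linarith [this, real_inner_comm (F v) w, real_inner_comm x0 w]

lemma dense_affineIndependent_comp {N k : ℕ} {V : Type} [NormedAddCommGroup V]
    [InnerProductSpace ℝ V] [FiniteDimensional ℝ V] (hV : 1 ≤ Module.finrank ℝ V)
    (F : EuclideanSpace ℝ (Fin N) → V)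
    (HF : ∀ (w : V), w ≠ 0 → ∀ b : ℝ, Dense {v : EuclideanSpace ℝ (Fin N) | ⟪w, F v⟫ ≠ b}) :
    ∀ (s : Finset (Fin k)), s.card ≤ Module.finrank ℝ V + 1 →
      Dense {y : Fin k → EuclideanSpace ℝ (Fin N) |
        AffineIndependent ℝ (fun i : s => F (y i))} := by
  classical
  intro s
  induction s using Finset.induction_on with
  | empty =>
    intro _
    have hsub : Subsingleton ((∅ : Finset (Fin k)) : Finset (Fin k)) :=
      ⟨fun a _ => absurd a.2 (Finset.notMem_empty _)⟩
    have : {y : Fin k → EuclideanSpace ℝ (Fin N) |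
        AffineIndependent ℝ (fun i : (∅ : Finset (Fin k)) => F (y i))} = Set.univ :=
      Set.eq_univ_of_forall fun y => affineIndependent_of_subsingleton ℝ _
    rw [this]; exact dense_univ
  | @insert j t hjt IH =>
    intro hcard
    rw [Finset.card_insert_of_notMem hjt] at hcard
    have hct : t.card ≤ Module.finrank ℝ V := by omega
    have IH' := IH (by omega)
    rw [Metric.dense_iff]
    intro y ε hε
    -- step 1: perturb the points of t
    obtain ⟨y'', hy''ball, hy''indep⟩ :=
      IH'.inter_open_nonempty (ball y (ε/2)) isOpen_ball
        (nonempty_ball.mpr (by linarith))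
    -- step 2: the affine span of the perturbed points of t is a proper subspace
    set A : AffineSubspace ℝ V := affineSpan ℝ (Set.range fun i : t => F (y'' i)) with hA
    have hAdir : A.direction ≠ ⊤ := by
      rw [hA, direction_affineSpan]
      intro htop
      have hrank : Module.finrank ℝ (vectorSpan ℝ (Set.range fun i : t => F (y'' i)))
          = Module.finrank ℝ V := by rw [htop]; exact finrank_top ℝ V
      rcases Finset.eq_empty_or_nonempty t with rfl | hne
      · have : (Set.range fun i : (∅ : Finset (Fin k)) => F (y'' i)) = ∅ :=
          Set.range_eq_empty _
        rw [this, vectorSpan_empty, finrank_bot] at hrank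
        omega
      · have hcardpos : 0 < t.card := Finset.card_pos.mpr hne
        have hle : Module.finrank ℝ (vectorSpan ℝ (Set.range fun i : t => F (y'' i)))
            ≤ t.card - 1 := by
          apply finrank_vectorSpan_range_le ℝ _ (n := t.card - 1)
          rw [Fintype.card_coe]
          omega
        omega
    -- step 3: choose the new point
    obtain ⟨v, hvball, hvnot⟩ :=
      (dense_avoid_affine F HF A hAdir).inter_open_nonempty (ball (y j) (ε/2)) isOpen_ball
        (nonempty_ball.mpr (by linarith))
    refine ⟨Function.update y'' j v, ?_, ?_⟩
    · rw [mem_ball, dist_pi_lt_iff hε]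
      intro i
      by_cases hij : i = j
      · subst hij
        rw [Function.update_self]
        exact lt_trans (mem_ball.mp hvball) (by linarith)
      · rw [Function.update_of_ne hij]
        exact lt_of_le_of_lt (dist_le_pi_dist y'' y i) (lt_trans (mem_ball.mp hy''ball) (by linarith))
    · -- affine independence of the new family
      set y' := Function.update y'' j v with hy'
      have hjj : j ∈ insert j t := Finset.mem_insert_self j t
      set jj : (insert j t : Finset (Fin k)) := ⟨j, hjj⟩ with hjjdef
      have hy'j : y' j = v := Function.update_self j v y''
      have hy't : ∀ i : Fin k, i ∈ t → y' i = y'' i := by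
        intro i hi
        have : i ≠ j := fun h => hjt (h ▸ hi)
        exact Function.update_of_ne this v y''
      refine AffineIndependent.affineIndependent_of_notMem_span (i := jj) ?_ ?_
      · -- the family indexed by elements ≠ jj is affinely independent
        have hmem : ∀ x : {x : (insert j t : Finset (Fin k)) // x ≠ jj}, (x.1 : Fin k) ∈ t := by
          rintro ⟨⟨i, hi⟩, hne⟩
          rcases Finset.mem_insert.mp hi with h | h
          · exact absurd (Subtype.ext h) hne
          · exact h
        have hemb : Function.Injective
            (fun x : {x : (insert j t : Finset (Fin k)) // x ≠ jj} => (⟨x.1.1, hmem x⟩ : t)) := by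
          rintro ⟨⟨i1, h1⟩, hne1⟩ ⟨⟨i2, h2⟩, hne2⟩ h
          simp only [Subtype.mk.injEq] at h ⊢
          exact h
        have := hy''indep.comp_embedding ⟨_, hemb⟩
        convert this using 1
        · rfl
        funext x
        simp only [Function.Embedding.coeFn_mk, Function.comp_apply]
        exact congrArg F (hy't _ (hmem x))
      · -- the new point is not in the span of the others
        have himg : ((fun x : (insert j t : Finset (Fin k)) => F (y' x)) ''
            {x | x ≠ jj}) = Set.range fun i : t => F (y'' i) := by
          ext z
          constructor
          · rintro ⟨x, hx, rfl⟩
            have hxt : (x : Fin k) ∈ t := by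
              rcases Finset.mem_insert.mp x.2 with h | h
              · exact absurd (Subtype.ext h) hx
              · exact h
            exact ⟨⟨x.1, hxt⟩, (congrArg F (hy't _ hxt)).symm⟩
          · rintro ⟨i, rfl⟩
            refine ⟨⟨i.1, Finset.mem_insert_of_mem i.2⟩, ?_, ?_⟩
            · intro h
              apply hjt
              have : (i : Fin k) = j := by simpa [hjjdef, Subtype.ext_iff] using h
              exact this ▸ i.2
            · exact congrArg F (hy't _ i.2)
        rw [himg]
        simpa [hy'j, hA, hjjdef] using hvnot

lemma HF_id {N : ℕ} (hN : 1 ≤ N) (w : EuclideanSpace ℝ (Fin N)) (hw : w ≠ 0) (b : ℝ) :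
    Dense {v : EuclideanSpace ℝ (Fin N) | ⟪w, v⟫ ≠ b} := by
  have := quad_dense hN w 0 b (Or.inl hw)
  simpa using this

lemma HF_lift {N : ℕ} (hN : 1 ≤ N) (w : EuclideanSpace ℝ (Fin (N+1))) (hw : w ≠ 0) (b : ℝ) :
    Dense {v : EuclideanSpace ℝ (Fin N) | ⟪w, liftE v⟫ ≠ b} := by
  set a : EuclideanSpace ℝ (Fin N) :=
    (WithLp.equiv 2 (Fin N → ℝ)).symm (fun j => w j.castSucc) with ha
  set c : ℝ := w (Fin.last N) with hc
  have haj : ∀ j, a j = w j.castSucc := fun j => rfl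
  have hinner : ∀ v : EuclideanSpace ℝ (Fin N), ⟪w, liftE v⟫ = ⟪a, v⟫ + c * ‖v‖^2 := by
    intro v
    simp only [PiLp.inner_apply, RCLike.inner_apply, conj_trivial, Fin.sum_univ_castSucc,
      liftE_castSucc, liftE_last, haj]
    rw [hc]
    ring
  have hne : a ≠ 0 ∨ c ≠ 0 := by
    by_contra hcon
    push_neg at hcon
    apply hw
    ext j
    refine Fin.lastCases ?_ (fun i => ?_) j
    · simpa [hc] using hcon.2
    · have := haj i
      rw [hcon.1] at this
      simpa using this.symm
  have := quad_dense hN a c b hne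
  refine this.mono ?_
  intro v hv
  show ⟪w, liftE v⟫ ≠ b
  rw [hinner v]
  exact hv


end Aux


/-- A tuple of `k` points of `ℝ^N` is in *general position* if every at most `N + 1` of
them are affinely independent and no `N + 2` of them lie on a common sphere (i.e. no
point of `ℝ^N` is equidistant from `N + 2` of them). For point sets in general position
the associated Voronoi complex is simple. -/
def InGeneralPosition (N k : ℕ) (y : Fin k → EuclideanSpace ℝ (Fin N)) : Prop :=
  (∀ s : Finset (Fin k), s.card ≤ N + 1 →
      AffineIndependent ℝ (fun i : s => y i)) ∧
  (∀ s : Finset (Fin k), s.card = N + 2 →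
      ¬ ∃ (x : EuclideanSpace ℝ (Fin N)) (r : ℝ), ∀ i ∈ s, dist x (y i) = r)

/-- Lemma 2.2 of the paper. The set of `k`-tuples of points of `ℝ^N`
in general position is open and dense in `(ℝ^N)^k`. -/
theorem isOpen_dense_inGeneralPosition (N k : ℕ) (hN : 1 ≤ N) (hk : 1 ≤ k) :
    IsOpen {y : Fin k → EuclideanSpace ℝ (Fin N) | InGeneralPosition N k y} ∧
    Dense {y : Fin k → EuclideanSpace ℝ (Fin N) | InGeneralPosition N k y} := by
  classical
  have hLcont : Continuous (liftE (N := N)) := by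
    unfold liftE
    refine (PiLp.continuous_toLp 2 _).comp (continuous_pi fun j => ?_)
    refine Fin.lastCases ?_ (fun i => ?_) j
    · simp only [Fin.snoc_last]
      exact (continuous_norm.pow 2)
    · simp only [Fin.snoc_castSucc]
      exact (continuous_apply i).comp (PiLp.continuous_ofLp 2 _)
  have hchar : {y : Fin k → EuclideanSpace ℝ (Fin N) | InGeneralPosition N k y} =
      ⋂ s : Finset (Fin k),
        ({y : Fin k → EuclideanSpace ℝ (Fin N) |
            s.card ≤ N + 1 → AffineIndependent ℝ (fun i : s => y i)} ∩
         {y : Fin k → EuclideanSpace ℝ (Fin N) |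
            s.card = N + 2 → AffineIndependent ℝ (fun i : s => liftE (y i))}) := by
    ext y
    simp only [Set.mem_iInter, Set.mem_inter_iff, Set.mem_setOf_eq, InGeneralPosition]
    constructor
    · rintro ⟨h1, h2⟩ s
      refine ⟨h1 s, fun hcard => ?_⟩
      by_contra hdep
      exact h2 s hcard (cospherical_of_not_affineIndependent_lift hN hcard h1 hdep)
    · intro h
      refine ⟨fun s hs => (h s).1 hs, fun s hcard hex => ?_⟩
      obtain ⟨x, r, hxr⟩ := hex
      exact not_affineIndependent_lift_of_cospherical hcard hxr ((h s).2 hcard)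
  have hopen1 : ∀ s : Finset (Fin k), IsOpen {y : Fin k → EuclideanSpace ℝ (Fin N) |
      s.card ≤ N + 1 → AffineIndependent ℝ (fun i : s => y i)} := by
    intro s
    by_cases hs : s.card ≤ N + 1
    · have heq : {y : Fin k → EuclideanSpace ℝ (Fin N) |
          s.card ≤ N + 1 → AffineIndependent ℝ (fun i : s => y i)} =
          (fun y : Fin k → EuclideanSpace ℝ (Fin N) => fun i : s => y i) ⁻¹'
            {p : s → EuclideanSpace ℝ (Fin N) | AffineIndependent ℝ p} := by
        ext y; simp [hs]
      rw [heq]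
      exact (isOpen_affineIndependent _ _).preimage
        (continuous_pi fun i : s => continuous_apply (i : Fin k))
    · have heq : {y : Fin k → EuclideanSpace ℝ (Fin N) |
          s.card ≤ N + 1 → AffineIndependent ℝ (fun i : s => y i)} = Set.univ := by
        ext y; simp [hs]
      rw [heq]; exact isOpen_univ
  have hopen2 : ∀ s : Finset (Fin k), IsOpen {y : Fin k → EuclideanSpace ℝ (Fin N) |
      s.card = N + 2 → AffineIndependent ℝ (fun i : s => liftE (y i))} := by
    intro s
    by_cases hs : s.card = N + 2
    · have heq : {y : Fin k → EuclideanSpace ℝ (Fin N) |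
          s.card = N + 2 → AffineIndependent ℝ (fun i : s => liftE (y i))} =
          (fun y : Fin k → EuclideanSpace ℝ (Fin N) => fun i : s => liftE (y i)) ⁻¹'
            {p : s → EuclideanSpace ℝ (Fin (N+1)) | AffineIndependent ℝ p} := by
        ext y; simp [hs]
      rw [heq]
      exact (isOpen_affineIndependent _ _).preimage
        (continuous_pi fun i : s => hLcont.comp (continuous_apply (i : Fin k)))
    · have heq : {y : Fin k → EuclideanSpace ℝ (Fin N) |
          s.card = N + 2 → AffineIndependent ℝ (fun i : s => liftE (y i))} = Set.univ := by
        ext y; simp [hs]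
      rw [heq]; exact isOpen_univ
  have hdense : ∀ s : Finset (Fin k), Dense
      ({y : Fin k → EuclideanSpace ℝ (Fin N) |
          s.card ≤ N + 1 → AffineIndependent ℝ (fun i : s => y i)} ∩
       {y : Fin k → EuclideanSpace ℝ (Fin N) |
          s.card = N + 2 → AffineIndependent ℝ (fun i : s => liftE (y i))}) := by
    intro s
    by_cases hs1 : s.card ≤ N + 1
    · have h2univ : {y : Fin k → EuclideanSpace ℝ (Fin N) |
          s.card = N + 2 → AffineIndependent ℝ (fun i : s => liftE (y i))} = Set.univ := by
        ext y; simp only [Set.mem_setOf_eq, Set.mem_univ, iff_true]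
        intro hcard; omega
      rw [h2univ, Set.inter_univ]
      have hd : Dense {y : Fin k → EuclideanSpace ℝ (Fin N) |
          AffineIndependent ℝ (fun i : s => y i)} := by
        have := dense_affineIndependent_comp (N := N) (k := k)
          (V := EuclideanSpace ℝ (Fin N)) (by rw [finrank_euclideanSpace_fin]; omega)
          (fun v => v) (fun w hw b => HF_id hN w hw b) s
          (by rw [finrank_euclideanSpace_fin]; omega)
        exact this
      exact hd.mono fun y hy => fun _ => hy
    · by_cases hs2 : s.card = N + 2
      · have h1univ : {y : Fin k → EuclideanSpace ℝ (Fin N) |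
            s.card ≤ N + 1 → AffineIndependent ℝ (fun i : s => y i)} = Set.univ := by
          ext y; simp only [Set.mem_setOf_eq, Set.mem_univ, iff_true]
          intro hcard; omega
        rw [h1univ, Set.univ_inter]
        have hd : Dense {y : Fin k → EuclideanSpace ℝ (Fin N) |
            AffineIndependent ℝ (fun i : s => liftE (y i))} := by
          have := dense_affineIndependent_comp (N := N) (k := k)
            (V := EuclideanSpace ℝ (Fin (N+1))) (by rw [finrank_euclideanSpace_fin]; omega)
            liftE (fun w hw b => HF_lift hN w hw b) s
            (by rw [finrank_euclideanSpace_fin]; omega)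
          exact this
        exact hd.mono fun y hy => fun _ => hy
      · have h1univ : {y : Fin k → EuclideanSpace ℝ (Fin N) |
            s.card ≤ N + 1 → AffineIndependent ℝ (fun i : s => y i)} = Set.univ := by
          ext y; simp only [Set.mem_setOf_eq, Set.mem_univ, iff_true]
          intro hcard; omega
        have h2univ : {y : Fin k → EuclideanSpace ℝ (Fin N) |
            s.card = N + 2 → AffineIndependent ℝ (fun i : s => liftE (y i))} = Set.univ := by
          ext y; simp only [Set.mem_setOf_eq, Set.mem_univ, iff_true]
          intro hcard; omega
        rw [h1univ, h2univ, Set.univ_inter]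
        exact dense_univ
  constructor
  · rw [hchar]
    exact isOpen_iInter_of_finite fun s => (hopen1 s).inter (hopen2 s)
  · rw [hchar]
    exact dense_iInter_of_isOpen (fun s => (hopen1 s).inter (hopen2 s)) hdense
end

section
/- Let N ≥ 1 and k ≥ 1. The set of tuples y : Fin k → ℝ^N all of whose points have rational coordinates and which satisfy: (a) for every subset s ⊆ Fin k of cardinality at most N + 1, the family (y_i)_{i ∈ s} is affinely independent, and (b) for every subset s ⊆ Fin k of cardinality N + 2, there is no point x ∈ ℝ^N equidistant from all the points y_i, i ∈ s, is dense in (ℝ^N)^k. -/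
open Metric Set

/-- Rational points are dense in Euclidean space. -/
lemma dense_ratPoints (N : ℕ) :
    Dense {x : EuclideanSpace ℝ (Fin N) | ∀ j, ∃ q : ℚ, x j = (q : ℝ)} := by
  have h : Dense (Set.univ.pi fun _ : Fin N => Set.range ((↑) : ℚ → ℝ)) :=
    dense_pi _ fun i _ => Rat.denseRange_cast
  have hmap : IsOpenMap (EuclideanSpace.equiv (Fin N) ℝ) :=
    (EuclideanSpace.equiv (Fin N) ℝ).toHomeomorph.isOpenMap
  have := h.preimage hmap
  convert this using 1
  ext x
  simp only [Set.mem_setOf_eq, Set.mem_preimage, Set.mem_pi, Set.mem_univ, forall_true_left,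
    Set.mem_range]
  exact forall_congr' fun j => ⟨fun ⟨q, hq⟩ => ⟨q, hq.symm⟩, fun ⟨q, hq⟩ => ⟨q, hq.symm⟩⟩

lemma span_ne_top {N k : ℕ} (hN : 1 ≤ N) (z : Fin k → EuclideanSpace ℝ (Fin N))
    (t : Finset (Fin k)) (ht : t.card ≤ N) :
    affineSpan ℝ (z '' ↑t) ≠ ⊤ := by
  classical
  rcases t.eq_empty_or_nonempty with rfl | hne
  · simp only [Finset.coe_empty, Set.image_empty, AffineSubspace.span_empty]
    exact AffineSubspace.bot_ne_top ℝ _ _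
  · intro h
    have hcard : t.card = (t.card - 1) + 1 :=
      (Nat.succ_pred_eq_of_pos (Finset.card_pos.mpr hne)).symm
    have hle : Module.finrank ℝ (vectorSpan ℝ
        ((t.image z : Finset (EuclideanSpace ℝ (Fin N))) : Set (EuclideanSpace ℝ (Fin N)))) ≤
        t.card - 1 := by
      classical
      exact finrank_vectorSpan_image_finset_le ℝ z t hcard
    rw [Finset.coe_image] at hle
    have hdir : (affineSpan ℝ (z '' ↑t)).direction = ⊤ := by
      rw [h]; exact AffineSubspace.direction_top ℝ _ _
    rw [direction_affineSpan] at hdir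
    rw [hdir, finrank_top, finrank_euclideanSpace, Fintype.card_fin] at hle
    omega

lemma dense_compl_of_ne_top {N : ℕ} (A : AffineSubspace ℝ (EuclideanSpace ℝ (Fin N)))
    [FiniteDimensional ℝ A.direction] (hA : A ≠ ⊤) :
    IsOpen ((↑A : Set (EuclideanSpace ℝ (Fin N))))ᶜ ∧
      Dense ((↑A : Set (EuclideanSpace ℝ (Fin N))))ᶜ := by
  have hc : IsClosed (A : Set (EuclideanSpace ℝ (Fin N))) := A.closed_of_finiteDimensional
  refine ⟨hc.isOpen_compl, ?_⟩
  rw [← interior_eq_empty_iff_dense_compl, ← Set.not_nonempty_iff_eq_empty]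
  intro hne
  apply hA
  have := A.convex.interior_nonempty_iff_affineSpan_eq_top.mp hne
  rwa [AffineSubspace.affineSpan_coe] at this

lemma aux_step (N k : ℕ) (hN : 1 ≤ N) :
    ∀ m : ℕ, ∀ (y : Fin k → EuclideanSpace ℝ (Fin N)) (ε : ℝ), 0 < ε →
    ∃ z : Fin k → EuclideanSpace ℝ (Fin N),
      (∀ i j, ∃ q : ℚ, z i j = (q : ℝ)) ∧
      (∀ i, dist (z i) (y i) < ε) ∧
      (∀ s : Finset (Fin k), (∀ i ∈ s, (i : ℕ) < m) → s.card ≤ N + 1 →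
        AffineIndependent ℝ (fun i : s => z i)) ∧
      (∀ s : Finset (Fin k), (∀ i ∈ s, (i : ℕ) < m) → s.card = N + 2 →
        ¬ ∃ (x : EuclideanSpace ℝ (Fin N)) (r : ℝ), ∀ i ∈ s, dist x (z i) = r) := by
  have hnt : Nontrivial (EuclideanSpace ℝ (Fin N)) := by
    apply Module.nontrivial_of_finrank_pos (R := ℝ)
    rw [finrank_euclideanSpace, Fintype.card_fin]; omega
  intro m
  induction m with
  | zero =>
    intro y ε hε
    have hch : ∀ i : Fin k, ∃ p : EuclideanSpace ℝ (Fin N),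
        (∀ j, ∃ q : ℚ, p j = (q : ℝ)) ∧ dist p (y i) < ε := by
      intro i
      obtain ⟨p, hp1, hp2⟩ := (Metric.dense_iff.mp (dense_ratPoints N)) (y i) ε hε
      exact ⟨p, hp2, by rwa [Metric.mem_ball] at hp1⟩
    choose z hz1 hz2 using hch
    refine ⟨z, hz1, hz2, ?_, ?_⟩
    · intro s hs _
      have : s = ∅ := Finset.eq_empty_of_forall_notMem fun i hi => by
        have := hs i hi; omega
      subst this
      have : IsEmpty ((∅ : Finset (Fin k)) : Type) := by
        constructor; rintro ⟨i, hi⟩; exact absurd hi (Finset.notMem_empty i)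
      exact affineIndependent_of_subsingleton ℝ _
    · intro s hs hcard
      have : s = ∅ := Finset.eq_empty_of_forall_notMem fun i hi => by
        have := hs i hi; omega
      subst this
      simp at hcard
  | succ m ih =>
    intro y ε hε
    obtain ⟨z, hzq, hzd, hza, hzb⟩ := ih y ε hε
    rcases le_or_gt k m with hkm | hmk
    · -- m ≥ k : conditions are the same
      refine ⟨z, hzq, hzd, ?_, ?_⟩
      · intro s _ hcard
        exact hza s (fun i _ => lt_of_lt_of_le i.isLt hkm) hcard
      · intro s _ hcard
        exact hzb s (fun i _ => lt_of_lt_of_le i.isLt hkm) hcard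
    · set i₀ : Fin k := ⟨m, hmk⟩ with hi₀def
      have hi₀val : (i₀ : ℕ) = m := rfl
      set G : Finset (Fin k) → Set (EuclideanSpace ℝ (Fin N)) := fun t =>
        {w | (∀ i ∈ t, (i : ℕ) < m) →
          ((t.card ≤ N → w ∉ affineSpan ℝ (z '' ↑t)) ∧
           (t.card = N + 1 →
             ¬ ∃ (x : EuclideanSpace ℝ (Fin N)) (r : ℝ),
               (∀ i ∈ t, dist x (z i) = r) ∧ dist x w = r))} with hGdef
      have key : ∀ t, IsOpen (G t) ∧ Dense (G t) := by
        intro t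
        by_cases hl : ∀ i ∈ t, (i : ℕ) < m
        · rcases le_or_gt t.card N with hc | hc
          · have hG : G t = (↑(affineSpan ℝ (z '' (↑t : Set (Fin k)))) :
                Set (EuclideanSpace ℝ (Fin N)))ᶜ := by
              ext w
              simp only [hGdef, Set.mem_setOf_eq, Set.mem_compl_iff, SetLike.mem_coe]
              constructor
              · intro h; exact (h hl).1 hc
              · intro h _; exact ⟨fun _ => h, fun hc1 => absurd hc1 (by omega)⟩
            rw [hG]
            exact dense_compl_of_ne_top _ (span_ne_top hN z t hc)
          · by_cases hc2 : t.card = N + 1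
            · -- sphere case
              have hne : t.Nonempty := Finset.card_pos.mp (by omega)
              have : Nonempty (t : Type) := Finset.nonempty_coe_sort.mpr hne
              have hind : AffineIndependent ℝ (fun i : t => z i) := hza t hl (by omega)
              obtain ⟨cs, ⟨hcs_mem, hcs_sub⟩, hcs_uniq⟩ := hind.existsUnique_dist_eq
              have hspan : affineSpan ℝ (Set.range fun i : t => z i) = ⊤ := by
                rw [hind.affineSpan_eq_top_iff_card_eq_finrank_add_one]
                rw [Fintype.card_coe, finrank_euclideanSpace, Fintype.card_fin]
                exact hc2
              have hG : G t = (Metric.sphere cs.center cs.radius)ᶜ := by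
                ext w
                simp only [hGdef, Set.mem_setOf_eq, Set.mem_compl_iff, Metric.mem_sphere]
                constructor
                · intro h hw
                  refine ((h hl).2 hc2) ⟨cs.center, cs.radius, fun i hi => ?_, ?_⟩
                  · have : z i ∈ (cs : Set (EuclideanSpace ℝ (Fin N))) :=
                      hcs_sub ⟨⟨i, hi⟩, rfl⟩
                    rw [EuclideanGeometry.Sphere.mem_coe, EuclideanGeometry.mem_sphere] at this
                    rw [dist_comm]; exact this
                  · rw [dist_comm]; exact hw
                · intro hw _
                  refine ⟨fun hcle => absurd hc2 (by omega), fun _ => ?_⟩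
                  rintro ⟨x, r, hxr, hxw⟩
                  have heq : (⟨x, r⟩ : EuclideanGeometry.Sphere (EuclideanSpace ℝ (Fin N))) = cs := by
                    apply hcs_uniq
                    constructor
                    · rw [hspan]; exact AffineSubspace.mem_top ℝ _ _
                    · rintro p ⟨i, rfl⟩
                      rw [EuclideanGeometry.Sphere.mem_coe, EuclideanGeometry.mem_sphere]
                      rw [dist_comm]
                      exact hxr i i.2
                  have hx : x = cs.center := by rw [← heq]
                  have hr : r = cs.radius := by rw [← heq]
                  apply hw
                  rw [← hx, ← hr, dist_comm]
                  exact hxw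
              rw [hG]
              refine ⟨isClosed_sphere.isOpen_compl, ?_⟩
              rw [← interior_eq_empty_iff_dense_compl]
              exact interior_sphere' cs.center cs.radius
            · have hG : G t = Set.univ := by
                ext w
                simp only [hGdef, Set.mem_setOf_eq, Set.mem_univ, iff_true]
                intro _
                exact ⟨fun hcle => absurd hcle (by omega), fun h => absurd h hc2⟩
              rw [hG]
              exact ⟨isOpen_univ, dense_univ⟩
        · have hG : G t = Set.univ := by
            ext w
            simp only [hGdef, Set.mem_setOf_eq, Set.mem_univ, iff_true]
            intro h
            exact absurd h hl
          rw [hG]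
          exact ⟨isOpen_univ, dense_univ⟩
      have hopen : IsOpen (Metric.ball (y i₀) ε ∩ ⋂ t, G t) :=
        Metric.isOpen_ball.inter (isOpen_iInter_of_finite fun t => (key t).1)
      have hdense : Dense (⋂ t, G t) :=
        dense_iInter_of_isOpen (fun t => (key t).1) (fun t => (key t).2)
      have hnonempty : (Metric.ball (y i₀) ε ∩ ⋂ t, G t).Nonempty :=
        hdense.inter_open_nonempty _ Metric.isOpen_ball (Metric.nonempty_ball.mpr hε)
      obtain ⟨w, hwo, hwq⟩ :=
        (dense_ratPoints N).inter_open_nonempty _ hopen hnonempty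
      obtain ⟨hwb, hwG⟩ := hwo
      set z' := Function.update z i₀ w with hz'def
      have hz'eq : ∀ i : Fin k, i ≠ i₀ → z' i = z i := fun i hi =>
        Function.update_of_ne hi w z
      have hz'i₀ : z' i₀ = w := Function.update_self i₀ w z
      have hlow : ∀ (s : Finset (Fin k)), (∀ i ∈ s, (i : ℕ) < m + 1) → i₀ ∉ s →
          ∀ i ∈ s, (i : ℕ) < m := by
        intro s hs hi₀ i hi
        have h1 := hs i hi
        have h2 : (i : ℕ) ≠ m := fun h => hi₀ (by
          have : i = i₀ := Fin.ext (by rw [h, hi₀val])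
          rwa [this] at hi)
        omega
      refine ⟨z', ?_, ?_, ?_, ?_⟩
      · intro i j
        by_cases hi : i = i₀
        · subst hi; rw [hz'i₀]; exact hwq j
        · rw [hz'eq i hi]; exact hzq i j
      · intro i
        by_cases hi : i = i₀
        · subst hi; rw [hz'i₀]; rwa [Metric.mem_ball] at hwb
        · rw [hz'eq i hi]; exact hzd i
      · -- affine independence
        intro s hs hcard
        by_cases hi₀ : i₀ ∈ s
        · set t := s.erase i₀ with htdef
          have hlt : ∀ i ∈ t, (i : ℕ) < m := by
            intro i hi
            have h1 := hs i (Finset.mem_of_mem_erase hi)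
            have h2 : i ≠ i₀ := Finset.ne_of_mem_erase hi
            have h3 : (i : ℕ) ≠ m := fun h => h2 (Fin.ext (by rw [h, hi₀val]))
            omega
          have htc : t.card ≤ N := by
            have h := Finset.card_erase_of_mem hi₀
            rw [← htdef] at h; omega
          have hindt : AffineIndependent ℝ (fun i : t => z i) := hza t hlt (by omega)
          have hw : w ∉ affineSpan ℝ (z '' ↑t) :=
            ((Set.mem_iInter.mp hwG t) hlt).1 htc
          set i' : (s : Type) := ⟨i₀, hi₀⟩ with hi'def
          apply AffineIndependent.affineIndependent_of_notMem_span (i := i')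
          · -- independence on the rest
            let emb : {x : (s : Type) // x ≠ i'} ↪ (t : Type) :=
              ⟨fun x => ⟨x.1.1, Finset.mem_erase.mpr
                ⟨fun h => x.2 (Subtype.ext h), x.1.2⟩⟩,
               fun a b hab => Subtype.ext (Subtype.ext (by
                 have := congrArg (fun u : (t : Type) => (u : Fin k)) hab
                 exact this))⟩
            have hcomp := hindt.comp_embedding emb
            have hfun : (fun x : {y : (s : Type) // y ≠ i'} => z' ((x : (s : Type)) : Fin k)) =
                (fun i : (t : Type) => z i) ∘ emb := by
              funext x
              have hne : ((x : (s : Type)) : Fin k) ≠ i₀ := fun h => x.2 (Subtype.ext h)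
              simp only [Function.comp_apply, Function.Embedding.coeFn_mk]
              exact hz'eq _ hne
            rw [hfun]
            exact hcomp
          · -- not in span
            have himg : (fun i : (s : Type) => z' i) '' {x | x ≠ i'} = z '' ↑t := by
              ext e
              constructor
              · rintro ⟨x, hx, rfl⟩
                have hne : (x : Fin k) ≠ i₀ := fun h => hx (Subtype.ext h)
                refine ⟨x, Finset.mem_erase.mpr ⟨hne, x.2⟩, (hz'eq _ hne).symm⟩
              · rintro ⟨i, hi, rfl⟩
                have hi' : i ∈ s := Finset.mem_of_mem_erase hi
                have hne : i ≠ i₀ := Finset.ne_of_mem_erase hi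
                exact ⟨⟨i, hi'⟩, fun h => hne (congrArg Subtype.val h),
                  hz'eq i hne⟩
            rw [himg]
            have : z' i₀ = w := hz'i₀
            simpa [hi'def, this] using hw
        · have hlt := hlow s hs hi₀
          have := hza s hlt hcard
          have hfun : (fun i : (s : Type) => z' i) = fun i : (s : Type) => z i := by
            funext i
            exact hz'eq i (fun h => hi₀ (h ▸ i.2))
          rw [hfun]
          exact this
      · -- no common sphere
        intro s hs hcard
        by_cases hi₀ : i₀ ∈ s
        · set t := s.erase i₀ with htdef
          have hlt : ∀ i ∈ t, (i : ℕ) < m := by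
            intro i hi
            have h1 := hs i (Finset.mem_of_mem_erase hi)
            have h3 : (i : ℕ) ≠ m := fun h =>
              (Finset.ne_of_mem_erase hi) (Fin.ext (by rw [h, hi₀val]))
            omega
          have htc : t.card = N + 1 := by
            have h := Finset.card_erase_of_mem hi₀
            rw [← htdef] at h
            have hs1 : 1 ≤ s.card := Finset.card_pos.mpr ⟨i₀, hi₀⟩
            omega
          have hbad := ((Set.mem_iInter.mp hwG t) hlt).2 htc
          rintro ⟨x, r, hxr⟩
          apply hbad
          refine ⟨x, r, fun i hi => ?_, ?_⟩
          · have hne : i ≠ i₀ := Finset.ne_of_mem_erase hi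
            rw [← hz'eq i hne]
            exact hxr i (Finset.mem_of_mem_erase hi)
          · rw [← hz'i₀]
            exact hxr i₀ hi₀
        · have hlt := hlow s hs hi₀
          rintro ⟨x, r, hxr⟩
          exact hzb s hlt hcard ⟨x, r, fun i hi => by
            rw [← hz'eq i (fun h => hi₀ (h ▸ hi))]
            exact hxr i hi⟩

/-- rational case of Lemma 2.2 of the paper. The set of `k`-tuples of
points of `ℝ^N` with rational coordinates which are in general position is dense in
`(ℝ^N)^k`. -/
theorem dense_rational_inGeneralPosition (N k : ℕ) (hN : 1 ≤ N) (hk : 1 ≤ k) :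
    Dense {y : Fin k → EuclideanSpace ℝ (Fin N) |
      (∀ i : Fin k, ∀ j : Fin N, ∃ q : ℚ, y i j = (q : ℝ)) ∧
      InGeneralPosition N k y} := by
  intro y
  rw [Metric.mem_closure_iff]
  intro ε hε
  obtain ⟨z, hzq, hzd, hza, hzb⟩ := aux_step N k hN k y ε hε
  refine ⟨z, ⟨hzq, ⟨fun s hc => hza s (fun i _ => i.isLt) hc,
    fun s hc => hzb s (fun i _ => i.isLt) hc⟩⟩, ?_⟩
  rw [dist_pi_lt_iff hε]
  intro i
  rw [dist_comm]
  exact hzd i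
end

section
/- Let f, g ∈ ℂ[u₁, u₂, u₃] be polynomials in three variables over ℂ. Assume: (i) f(x, y, 0) = g(x, y, 0) for all x, y ∈ ℂ; and (ii) f(x, z, z²) = g(x + z, z, z²) for all x, z ∈ ℂ. Then the one-variable polynomial function x ↦ f(x, 0, 0) is constant, i.e., f(x, 0, 0) = f(0, 0, 0) for every x ∈ ℂ. -/
open MvPolynomial Polynomial TrivSqZeroExt DualNumber

noncomputable section ExampleFiveFour

local notation "T" => DualNumber (Polynomial ℂ)

private def tt : T := TrivSqZeroExt.inl Polynomial.X

private def A0 : MvPolynomial (Fin 3) ℂ →ₐ[ℂ] T := MvPolynomial.aeval ![tt, ε, 0]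
private def A1 : MvPolynomial (Fin 3) ℂ →ₐ[ℂ] T := MvPolynomial.aeval ![tt + ε, ε, 0]
private def P0 : MvPolynomial (Fin 3) ℂ →ₐ[ℂ] Polynomial ℂ :=
  MvPolynomial.aeval ![Polynomial.X, 0, 0]

private lemma fst_A0 (p : MvPolynomial (Fin 3) ℂ) : TrivSqZeroExt.fst (A0 p) = P0 p := by
  have h : (TrivSqZeroExt.fstHom ℂ (Polynomial ℂ) (Polynomial ℂ)).comp A0 = P0 := by
    apply MvPolynomial.algHom_ext
    intro i
    fin_cases i <;> simp [A0, P0, tt]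
  have := DFunLike.congr_fun h p
  simpa using this

private lemma eps_mul_eq (w : T) : ε * w = ε * TrivSqZeroExt.inl (TrivSqZeroExt.fst w) := by
  apply TrivSqZeroExt.ext <;>
    simp [TrivSqZeroExt.snd_mul, MulOpposite.smul_eq_mul_unop]

private lemma key (p : MvPolynomial (Fin 3) ℂ) :
    A1 p = A0 p + ε * TrivSqZeroExt.inl (Polynomial.derivative (P0 p)) := by
  induction p using MvPolynomial.induction_on with
  | C a => simp [A0, A1, P0]
  | add p q hp hq =>
    rw [map_add, map_add, map_add, hp, hq, map_add, TrivSqZeroExt.inl_add]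
    ring
  | mul_X p i hp =>
    have heps : (ε : T) * ε = 0 := DualNumber.eps_mul_eps
    have hfst : ε * A0 p = ε * TrivSqZeroExt.inl (P0 p) := by
      rw [eps_mul_eq, fst_A0]
    fin_cases i
    · show A1 (p * MvPolynomial.X 0) = A0 (p * MvPolynomial.X 0)
        + ε * TrivSqZeroExt.inl (Polynomial.derivative (P0 (p * MvPolynomial.X 0)))
      have e1 : A1 (p * MvPolynomial.X 0) = A1 p * (tt + ε) := by simp [A1]
      have e0 : A0 (p * MvPolynomial.X 0) = A0 p * tt := by simp [A0]
      have eP : P0 (p * MvPolynomial.X 0) = P0 p * Polynomial.X := by simp [P0]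
      rw [e1, e0, eP, hp, Polynomial.derivative_mul, Polynomial.derivative_X, mul_one,
        TrivSqZeroExt.inl_add, TrivSqZeroExt.inl_mul]
      have htX : TrivSqZeroExt.inl (X : Polynomial ℂ) = tt := rfl
      rw [htX]
      linear_combination hfst + TrivSqZeroExt.inl (Polynomial.derivative (P0 p)) * heps
    · show A1 (p * MvPolynomial.X 1) = A0 (p * MvPolynomial.X 1)
        + ε * TrivSqZeroExt.inl (Polynomial.derivative (P0 (p * MvPolynomial.X 1)))
      have e1 : A1 (p * MvPolynomial.X 1) = A1 p * ε := by simp [A1]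
      have e0 : A0 (p * MvPolynomial.X 1) = A0 p * ε := by simp [A0]
      have eP : P0 (p * MvPolynomial.X 1) = 0 := by simp [P0]
      rw [e1, e0, eP, hp]
      simp only [Polynomial.derivative_zero, TrivSqZeroExt.inl_zero, mul_zero, add_zero]
      linear_combination TrivSqZeroExt.inl (Polynomial.derivative (P0 p)) * heps
    · show A1 (p * MvPolynomial.X 2) = A0 (p * MvPolynomial.X 2)
        + ε * TrivSqZeroExt.inl (Polynomial.derivative (P0 (p * MvPolynomial.X 2)))
      have e1 : A1 (p * MvPolynomial.X 2) = A1 p * 0 := by simp [A1]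
      have e0 : A0 (p * MvPolynomial.X 2) = A0 p * 0 := by simp [A0]
      have eP : P0 (p * MvPolynomial.X 2) = 0 := by simp [P0]
      rw [e1, e0, eP]
      simp

private lemma aeval_eq_eval (x : Fin 3 → ℂ) (p : MvPolynomial (Fin 3) ℂ) :
    MvPolynomial.aeval x p = MvPolynomial.eval x p := by
  rw [← MvPolynomial.coe_aeval_eq_eval]; rfl

private lemma eval_comp (x : Fin 3 → ℂ) (v : Fin 3 → MvPolynomial (Fin 3) ℂ)
    (p : MvPolynomial (Fin 3) ℂ) :
    MvPolynomial.eval x (MvPolynomial.aeval v p)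
      = MvPolynomial.eval (fun i => MvPolynomial.eval x (v i)) p := by
  rw [← aeval_eq_eval]
  have : ((MvPolynomial.aeval x : MvPolynomial (Fin 3) ℂ →ₐ[ℂ] ℂ).comp
      (MvPolynomial.aeval v)) p = MvPolynomial.aeval (fun i => MvPolynomial.aeval x (v i)) p := by
    rw [MvPolynomial.comp_aeval]
  simp only [AlgHom.comp_apply] at this
  rw [this, aeval_eq_eval]
  simp only [aeval_eq_eval]

/-- core computation of Example 5.4 of the paper. If two complex
polynomials `f, g` in three variables satisfy `f(x, y, 0) = g(x, y, 0)` and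
`f(x, z, z²) = g(x + z, z, z²)` for all complex `x, y, z`, then `x ↦ f(x, 0, 0)` is
constant. -/
theorem eval_const_of_two_pullbacks_agree (f g : MvPolynomial (Fin 3) ℂ)
    (h1 : ∀ x y : ℂ, MvPolynomial.eval ![x, y, 0] f = MvPolynomial.eval ![x, y, 0] g)
    (h2 : ∀ x z : ℂ,
      MvPolynomial.eval ![x, z, z ^ 2] f = MvPolynomial.eval ![x + z, z, z ^ 2] g) :
    ∀ x : ℂ, MvPolynomial.eval ![x, 0, 0] f = MvPolynomial.eval ![0, 0, 0] f := by
  -- polynomial identities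
  have hτ : MvPolynomial.aeval (![MvPolynomial.X 0, MvPolynomial.X 1, 0] : Fin 3 → MvPolynomial (Fin 3) ℂ) f
      = MvPolynomial.aeval (![MvPolynomial.X 0, MvPolynomial.X 1, 0] : Fin 3 → MvPolynomial (Fin 3) ℂ) g := by
    apply MvPolynomial.funext
    intro x
    rw [eval_comp, eval_comp]
    have hv : (fun i => MvPolynomial.eval x
        ((![MvPolynomial.X 0, MvPolynomial.X 1, 0] : Fin 3 → MvPolynomial (Fin 3) ℂ) i))
        = ![x 0, x 1, 0] := by
      funext i; fin_cases i <;> simp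
    rw [hv]; exact h1 (x 0) (x 1)
  have hαβ : MvPolynomial.aeval
        (![MvPolynomial.X 0, MvPolynomial.X 1, MvPolynomial.X 1 ^ 2] :
          Fin 3 → MvPolynomial (Fin 3) ℂ) f
      = MvPolynomial.aeval
        (![MvPolynomial.X 0 + MvPolynomial.X 1, MvPolynomial.X 1, MvPolynomial.X 1 ^ 2] :
          Fin 3 → MvPolynomial (Fin 3) ℂ) g := by
    apply MvPolynomial.funext
    intro x
    rw [eval_comp, eval_comp]
    have hv1 : (fun i => MvPolynomial.eval x
        ((![MvPolynomial.X 0, MvPolynomial.X 1, MvPolynomial.X 1 ^ 2] :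
          Fin 3 → MvPolynomial (Fin 3) ℂ) i)) = ![x 0, x 1, x 1 ^ 2] := by
      funext i; fin_cases i <;> simp
    have hv2 : (fun i => MvPolynomial.eval x
        ((![MvPolynomial.X 0 + MvPolynomial.X 1, MvPolynomial.X 1, MvPolynomial.X 1 ^ 2] :
          Fin 3 → MvPolynomial (Fin 3) ℂ) i)) = ![x 0 + x 1, x 1, x 1 ^ 2] := by
      funext i; fin_cases i <;> simp
    rw [hv1, hv2]; exact h2 (x 0) (x 1)
  -- A0 f = A0 g
  have hA0τ : A0.comp (MvPolynomial.aeval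
      (![MvPolynomial.X 0, MvPolynomial.X 1, 0] : Fin 3 → MvPolynomial (Fin 3) ℂ)) = A0 := by
    apply MvPolynomial.algHom_ext; intro i; fin_cases i <;> simp [A0]
  have hA0fg : A0 f = A0 g := by
    have hf := DFunLike.congr_fun hA0τ f
    have hg := DFunLike.congr_fun hA0τ g
    simp only [AlgHom.comp_apply] at hf hg
    rw [← hf, ← hg, hτ]
  -- A0 f = A1 g
  have hA0α : A0.comp (MvPolynomial.aeval
      (![MvPolynomial.X 0, MvPolynomial.X 1, MvPolynomial.X 1 ^ 2] :
        Fin 3 → MvPolynomial (Fin 3) ℂ)) = A0 := by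
    apply MvPolynomial.algHom_ext; intro i
    fin_cases i <;> simp [A0, DualNumber.eps_mul_eps, sq]
  have hA0β : A0.comp (MvPolynomial.aeval
      (![MvPolynomial.X 0 + MvPolynomial.X 1, MvPolynomial.X 1, MvPolynomial.X 1 ^ 2] :
        Fin 3 → MvPolynomial (Fin 3) ℂ)) = A1 := by
    apply MvPolynomial.algHom_ext; intro i
    fin_cases i <;> simp [A0, A1, DualNumber.eps_mul_eps, sq]
  have hA01 : A0 f = A1 g := by
    have hf := DFunLike.congr_fun hA0α f
    have hg := DFunLike.congr_fun hA0β g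
    simp only [AlgHom.comp_apply] at hf hg
    rw [← hf, ← hg, hαβ]
  -- derivative vanishes
  have hd : Polynomial.derivative (P0 g) = 0 := by
    have h := hA01.symm.trans hA0fg
    rw [key g] at h
    have h2' : ε * TrivSqZeroExt.inl (Polynomial.derivative (P0 g)) = 0 := by
      linear_combination h
    have h3 : TrivSqZeroExt.inr (R := Polynomial ℂ) (Polynomial.derivative (P0 g))
        = TrivSqZeroExt.inr 0 := by
      rw [TrivSqZeroExt.inr_zero, ← h2']
      apply TrivSqZeroExt.ext <;>
        simp [TrivSqZeroExt.snd_mul, MulOpposite.smul_eq_mul_unop]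
    exact TrivSqZeroExt.inr_injective h3
  have hC : P0 g = Polynomial.C ((P0 g).coeff 0) := Polynomial.eq_C_of_derivative_eq_zero hd
  -- transfer back to evaluations
  have hev : ∀ x : ℂ, MvPolynomial.eval ![x, 0, 0] g = Polynomial.eval x (P0 g) := by
    intro x
    have h : (Polynomial.aeval x : Polynomial ℂ →ₐ[ℂ] ℂ).comp P0
        = MvPolynomial.aeval ![x, 0, 0] := by
      rw [P0, MvPolynomial.comp_aeval]
      congr 1
      funext i; fin_cases i <;> simp
    have := DFunLike.congr_fun h g
    simp only [AlgHom.comp_apply] at this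
    have h2 : Polynomial.aeval x (P0 g) = Polynomial.eval x (P0 g) := by
      rw [Polynomial.coe_aeval_eq_eval]
    rw [← _root_.aeval_eq_eval, ← this, h2]
  intro x
  calc MvPolynomial.eval ![x, 0, 0] f = MvPolynomial.eval ![x, 0, 0] g := h1 x 0
    _ = Polynomial.eval x (P0 g) := hev x
    _ = Polynomial.eval 0 (P0 g) := by rw [hC]; simp
    _ = MvPolynomial.eval ![0, 0, 0] g := (hev 0).symm
    _ = MvPolynomial.eval ![0, 0, 0] f := (h1 0 0).symm

end ExampleFiveFour
end

section
/- Let f, g ∈ ℂ[[u₁, u₂, u₃]] be formal power series in three variables over ℂ. Assume: (i) substituting (u₁, u₂, u₃) := (X, Y, 0) into f and into g yields the same power series in ℂ[[X, Y]]; and (ii) substituting (u₁, u₂, u₃) := (X, Z, Z²) into f yields the same power series in ℂ[[X, Z]] as substituting (u₁, u₂, u₃) := (X + Z, Z, Z²) into g. Then the one-variable power series obtained by substituting (u₁, u₂, u₃) := (X, 0, 0) into f is constant, i.e., all its coefficients in positive degree vanish. -/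
/-- The coefficient of the monomial `u₁^i u₂^j u₃^k` in a formal power series
`f ∈ ℂ[[u₁, u₂, u₃]]`. -/
noncomputable def coeff3 (f : MvPowerSeries (Fin 3) ℂ) (i j k : ℕ) : ℂ :=
  MvPowerSeries.coeff
    (Finsupp.single (0 : Fin 3) i + Finsupp.single (1 : Fin 3) j +
      Finsupp.single (2 : Fin 3) k) f

/-- (power-series strengthening of Example 5.4 of the paper), stated
coefficientwise. Let `f, g ∈ ℂ[[u₁, u₂, u₃]]` be formal power series. Hypothesis `h1`
says that substituting `(u₁, u₂, u₃) := (X, Y, 0)` into `f` and into `g` yields the same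
series in `ℂ[[X, Y]]`: the coefficient of `X^i Y^j` of the result of this substitution
is the coefficient of `u₁^i u₂^j u₃^0` of the original series. Hypothesis `h2` says that
substituting `(X, Z, Z²)` into `f` and `(X + Z, Z, Z²)` into `g` yields the same series
in `ℂ[[X, Z]]`: the coefficient of `X^i Z^m` of `f(X, Z, Z²)` is
`∑_{j + 2k = m} f_{i,j,k}`, while that of `g(X + Z, Z, Z²)` is
`∑_{a ≥ i, (a - i) + j + 2k = m} (a choose i) g_{a,j,k}` (a finite sum, since
necessarily `a ≤ i + m`, `j ≤ m`, `k ≤ m`). The conclusion is that the series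
`f(X, 0, 0) ∈ ℂ[[X]]` is constant: its coefficient `f_{n,0,0}` of `X^n` vanishes for
every `n > 0`. -/
theorem powerSeries_pullbacks_agree_implies_const
    (f g : MvPowerSeries (Fin 3) ℂ)
    (h1 : ∀ i j : ℕ, coeff3 f i j 0 = coeff3 g i j 0)
    (h2 : ∀ i m : ℕ,
      ∑ p ∈ (Finset.range (m + 1) ×ˢ Finset.range (m + 1)).filter
          (fun p => p.1 + 2 * p.2 = m),
        coeff3 f i p.1 p.2
      = ∑ q ∈ ((Finset.range (i + m + 1) ×ˢ Finset.range (m + 1) ×ˢ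
            Finset.range (m + 1)).filter
          (fun q => i ≤ q.1 ∧ (q.1 - i) + q.2.1 + 2 * q.2.2 = m)),
        (q.1.choose i : ℂ) * coeff3 g q.1 q.2.1 q.2.2) :
    ∀ n : ℕ, 0 < n → coeff3 f n 0 0 = 0 := by
  have key : ∀ i : ℕ,
      coeff3 f i 1 0 = coeff3 g i 1 0 + (i + 1 : ℂ) * coeff3 g (i + 1) 0 0 := by
    intro i
    have h := h2 i 1
    have hL : (Finset.range (1 + 1) ×ˢ Finset.range (1 + 1)).filter
        (fun p => p.1 + 2 * p.2 = 1) = {((1 : ℕ), (0 : ℕ))} := by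
      ext p
      simp only [Finset.mem_filter, Finset.mem_product, Finset.mem_range,
        Finset.mem_singleton, Prod.ext_iff]
      omega
    have hR : ((Finset.range (i + 1 + 1) ×ˢ Finset.range (1 + 1) ×ˢ
          Finset.range (1 + 1)).filter
        (fun q => i ≤ q.1 ∧ (q.1 - i) + q.2.1 + 2 * q.2.2 = 1))
        = {(i, 1, 0), (i + 1, 0, 0)} := by
      ext q
      simp only [Finset.mem_filter, Finset.mem_product, Finset.mem_range,
        Finset.mem_insert, Finset.mem_singleton, Prod.ext_iff]
      omega
    rw [hL, hR] at h
    rw [Finset.sum_singleton] at h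
    rw [Finset.sum_pair (by simp)] at h
    simpa [Nat.choose_self, Nat.choose_succ_self_right] using h
  intro n hn
  obtain ⟨m, rfl⟩ : ∃ m, n = m + 1 := ⟨n - 1, by omega⟩
  have hk := key m
  rw [h1 m 1] at hk
  have hz : ((m : ℂ) + 1) * coeff3 g (m + 1) 0 0 = 0 := by
    have := hk.symm
    rwa [add_eq_left] at this
  have hne : ((m : ℂ) + 1) ≠ 0 := by
    exact_mod_cast Nat.succ_ne_zero m
  have hg : coeff3 g (m + 1) 0 0 = 0 := by
    rcases mul_eq_zero.mp hz with h | h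
    · exact absurd h hne
    · exact h
  rw [h1 (m + 1) 0, hg]
end
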